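/- Every unit interval graph (intersection graph of unit-length closed real intervals with non-integer endpoints) admits a 2-coloring of its vertices such that each color class induces a disjoint union of complete graphs. -/

import Mathlib

open SimpleGraph

/-- Every unit interval graph (the intersection graph of closed unit-length real
intervals with non-integer endpoints) admits a `2`-coloring of its vertices in which each
color class induces a disjoint union of complete graphs. -/
theorem unit_interval_two_coloring {V : Type*} [Fintype V] (ℓ : V → ℝ)
    (hni : ∀ v : V, ∀ n : ℤ, ℓ v ≠ (n : ℝ) ∧ ℓ v + 1 ≠ (n : ℝ))
    (G : SimpleGraph V)
    (hG : ∀ u v : V, G.Adj u v ↔ u ≠ v ∧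
      (Set.Icc (ℓ u) (ℓ u + 1) ∩ Set.Icc (ℓ v) (ℓ v + 1)).Nonempty) :
    ∃ c : V → Fin 2, ∀ u v w : V, c u = c v → c v = c w →
      G.Adj u v → G.Adj v w → u ≠ w → G.Adj u w := by
  refine ⟨fun v => if Even ⌊ℓ v⌋ then 0 else 1, ?_⟩
  have key : ∀ a b : V, G.Adj a b →
      (if Even ⌊ℓ a⌋ then (0 : Fin 2) else 1) = (if Even ⌊ℓ b⌋ then 0 else 1) →
      ⌊ℓ a⌋ = ⌊ℓ b⌋ := by
    intro a b hab hc
    obtain ⟨-, x, hx1, hx2⟩ := (hG a b).1 hab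
    have h1 : ℓ a ≤ ℓ b + 1 := le_trans hx1.1 hx2.2
    have h2 : ℓ b ≤ ℓ a + 1 := le_trans hx2.1 hx1.2
    have f1 : ⌊ℓ a⌋ ≤ ⌊ℓ b⌋ + 1 := by
      have := Int.floor_le_floor (R := ℝ) h1
      rwa [Int.floor_add_one] at this
    have f2 : ⌊ℓ b⌋ ≤ ⌊ℓ a⌋ + 1 := by
      have := Int.floor_le_floor (R := ℝ) h2
      rwa [Int.floor_add_one] at this
    have hpar : ⌊ℓ a⌋ % 2 = ⌊ℓ b⌋ % 2 := by
      by_cases h : Even ⌊ℓ a⌋ <;> by_cases h' : Even ⌊ℓ b⌋ <;>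
        simp only [h, h', if_true, if_false] at hc <;>
        first
        | (rw [Int.even_iff] at h h'; omega)
        | (rw [Int.even_iff] at h ⊢; rw [Int.not_even_iff] at h'; omega)
        | (rw [Int.not_even_iff] at h; rw [Int.even_iff] at h'; omega)
        | (rw [Int.not_even_iff] at h h'; omega)
        | exact absurd hc (by decide)
    omega
  intro u v w huv hvw hadjuv hadjvw hne
  have e1 := key u v hadjuv huv
  have e2 := key v w hadjvw hvw
  have e3 : ⌊ℓ u⌋ = ⌊ℓ w⌋ := e1.trans e2
  rw [hG]
  refine ⟨hne, max (ℓ u) (ℓ w), ⟨le_max_left _ _, ?_⟩, le_max_right _ _, ?_⟩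
  · rcases max_cases (ℓ u) (ℓ w) with ⟨h, -⟩ | ⟨h, -⟩
    · rw [h]; linarith
    · rw [h]
      have hwlt : ℓ w < ⌊ℓ w⌋ + 1 := Int.lt_floor_add_one _
      have hule : (⌊ℓ u⌋ : ℝ) ≤ ℓ u := Int.floor_le _
      rw [← e3] at hwlt
      linarith
  · rcases max_cases (ℓ u) (ℓ w) with ⟨h, -⟩ | ⟨h, -⟩
    · rw [h]
      have hult : ℓ u < ⌊ℓ u⌋ + 1 := Int.lt_floor_add_one _
      have hwle : (⌊ℓ w⌋ : ℝ) ≤ ℓ w := Int.floor_le _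
      rw [e3] at hult
      linarith
    · rw [h]; linarith
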